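/- Let $G$ be a disjoint union of cycles with $n$ vertices. Suppose each vertex is independently marked with probability $p = n^{-\epsilon/2}$ where $\epsilon \in (0,1)$ and $n^{\epsilon/2} \geq 3 c \ln n$ for a constant $c$. Then with probability at least $1 - n^{1-c}$, simultaneously for every cycle of length $k \geq n^{\epsilon}$, the number of marked vertices on that cycle is at most $2kp$, and moreover every cycle of length $k \geq n^{\epsilon}$ contains at least one marked vertex. -/

import Mathlib

open MeasureTheory Finset
open scoped ENNReal Classical

section helpers

variable {V : Type*} [Fintype V] {p : ℝ≥0∞} (hp1 : p ≤ 1)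

include hp1 in
private lemma bern_sum : p + (1 - p) = 1 := add_tsub_cancel_of_le hp1

include hp1 in
private lemma bern_le : p.toNNReal ≤ 1 := by
  simpa using ENNReal.toNNReal_mono ENNReal.one_ne_top hp1

include hp1 in
private lemma coe_bern : ((p.toNNReal : ℝ≥0∞) = p) ∧ (((1 - p.toNNReal : NNReal) : ℝ≥0∞) = 1 - p) := by
  have hpt : p ≠ ⊤ := ne_top_of_le_ne_top ENNReal.one_ne_top hp1
  constructor
  · exact ENNReal.coe_toNNReal hpt
  · rw [ENNReal.coe_sub, ENNReal.coe_one, ENNReal.coe_toNNReal hpt]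

private lemma meas_all (A : Set (V → Bool)) : MeasurableSet A :=
  A.to_countable.measurableSet

include hp1 in
private lemma measure_pi_bern (A : Set (V → Bool)) :
    Measure.pi (fun _ : V => (PMF.bernoulli p.toNNReal (bern_le hp1)).toMeasure) A
      = ∑ f ∈ univ.filter (· ∈ A), ∏ v, (if f v then p else 1 - p) := by
  classical
  have hsingle : ∀ f : V → Bool,
      Measure.pi (fun _ : V => (PMF.bernoulli p.toNNReal (bern_le hp1)).toMeasure) {f}
        = ∏ v, (if f v then p else 1 - p) := by
    intro f
    rw [← Set.univ_pi_singleton, Measure.pi_pi]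
    refine Finset.prod_congr rfl fun v _ => ?_
    rw [PMF.toMeasure_apply_singleton _ _ (measurableSet_singleton _),
      PMF.bernoulli_apply]
    cases f v <;> simp [(coe_bern hp1).1, (coe_bern hp1).2]
  have hA : A = ⋃ f ∈ univ.filter (· ∈ A), ({f} : Set (V → Bool)) := by
    ext g; simp
  conv_lhs => rw [hA]
  rw [measure_biUnion_finset]
  · exact Finset.sum_congr rfl fun f _ => hsingle f
  · intro f _ g _ hfg
    exact Set.disjoint_singleton.mpr hfg
  · intro f _
    exact measurableSet_singleton f


set_option maxHeartbeats 1000000 in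
include hp1 in
private lemma tail_bound (S : Finset V) (m : ℝ) :
    (2 : ℝ≥0∞) ^ m *
      Measure.pi (fun _ : V => (PMF.bernoulli p.toNNReal (bern_le hp1)).toMeasure)
        {f : V → Bool | m ≤ (((S.filter fun w => f w = true)).card : ℝ)}
      ≤ (1 + p) ^ S.card := by
  classical
  rw [measure_pi_bern hp1, Finset.mul_sum]
  have key : ∀ f ∈ univ.filter
      (· ∈ {f : V → Bool | m ≤ (((S.filter fun w => f w = true)).card : ℝ)}),
      (2:ℝ≥0∞) ^ m * ∏ v, (if f v then p else 1 - p)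
        ≤ ∏ v, ((if f v then p else 1 - p) * (if v ∈ S ∧ f v = true then 2 else 1)) := by
    intro f hf
    simp only [Finset.mem_filter, Set.mem_setOf_eq] at hf
    rw [Finset.prod_mul_distrib]
    have hprod : ∏ v, (if v ∈ S ∧ f v = true then (2:ℝ≥0∞) else 1)
        = 2 ^ ((S.filter fun w => f w = true)).card := by
      rw [← Finset.prod_filter, Finset.prod_const]
      congr 2
      ext w; simp
    have h2 : (2:ℝ≥0∞) ^ m ≤ ∏ v, (if v ∈ S ∧ f v = true then (2:ℝ≥0∞) else 1) := by
      rw [hprod, ← ENNReal.rpow_natCast]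
      exact ENNReal.rpow_le_rpow_of_exponent_le (by norm_num) hf.2
    rw [mul_comm (∏ v, (if f v then p else 1 - p))]
    exact mul_le_mul_left h2 _
  refine le_trans (Finset.sum_le_sum key) ?_
  refine le_trans (Finset.sum_le_sum_of_subset (Finset.filter_subset _ _)) ?_
  rw [← Fintype.prod_sum (fun (v : V) (b : Bool) =>
    ((if b then p else 1 - p) * (if v ∈ S ∧ b = true then (2:ℝ≥0∞) else 1)))]
  have hpt : ∀ v : V, (∑ b : Bool,
      ((if b then p else 1 - p) * (if v ∈ S ∧ b = true then (2:ℝ≥0∞) else 1)))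
      = if v ∈ S then 1 + p else 1 := by
    intro v
    rw [Fintype.sum_bool]
    by_cases hv : v ∈ S
    · simp only [hv, if_true, true_and, and_false, if_false, mul_one,
        Bool.false_eq_true, Bool.true_eq_false, mul_two]
      rw [add_assoc, bern_sum hp1, add_comm]
    · simp only [hv, if_false, false_and, mul_one, Bool.false_eq_true]
      exact bern_sum hp1
  rw [Finset.prod_congr rfl fun v _ => hpt v, Finset.prod_ite_mem,
    Finset.univ_inter, Finset.prod_const]

include hp1 in
private lemma nomark_bound (S : Finset V) :
    Measure.pi (fun _ : V => (PMF.bernoulli p.toNNReal (bern_le hp1)).toMeasure)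
      {f : V → Bool | ∀ w ∈ S, f w = false} = (1 - p) ^ S.card := by
  classical
  have hset : {f : V → Bool | ∀ w ∈ S, f w = false}
      = Set.pi Set.univ (fun v => if v ∈ S then {false} else Set.univ) := by
    ext f
    simp only [Set.mem_setOf_eq, Set.mem_pi, Set.mem_univ, forall_true_left]
    constructor
    · intro h v
      by_cases hv : v ∈ S
      · simp [hv, h v hv]
      · simp [hv]
    · intro h w hw
      have := h w
      simpa [hw] using this
  rw [hset, Measure.pi_pi]
  have hval : ∀ v : V, (PMF.bernoulli p.toNNReal (bern_le hp1)).toMeasure (if v ∈ S then {false} else Set.univ)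
      = if v ∈ S then 1 - p else 1 := by
    intro v
    by_cases hv : v ∈ S
    · simp only [hv, if_true]
      rw [PMF.toMeasure_apply_singleton _ _ (measurableSet_singleton _), PMF.bernoulli_apply]
      exact (coe_bern hp1).2
    · simp only [hv, if_false]
      exact measure_univ
  rw [Finset.prod_congr rfl fun v _ => hval v, Finset.prod_ite_mem,
    Finset.univ_inter, Finset.prod_const]

end helpers


set_option maxHeartbeats 1000000 in
theorem shrink_union_bound {V : Type*} [Fintype V]
    (σ : Equiv.Perm V) (n : ℕ) (hn : n = Fintype.card V)
    (ε c : ℝ) (hε0 : 0 < ε) (hε1 : ε < 1) (hc : 0 < c)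
    (hlarge : 3 * c * Real.log n ≤ (n : ℝ) ^ (ε / 2))
    (p : ENNReal) (hp : p = ENNReal.ofReal ((n : ℝ) ^ (-(ε / 2)))) (hp1 : p ≤ 1) :
    1 - (n : ℝ) ^ ((1 : ℝ) - c) ≤
      (Measure.pi (fun _ : V => (PMF.bernoulli p.toNNReal (by simpa using ENNReal.toNNReal_mono ENNReal.one_ne_top hp1)).toMeasure)
        {f : V → Bool | ∀ v : V,
          (n : ℝ) ^ ε ≤ (Nat.card {w : V | σ.SameCycle v w} : ℝ) →
          ((Nat.card {w : V | σ.SameCycle v w ∧ f w = true} : ℝ)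
              ≤ 2 * (Nat.card {w : V | σ.SameCycle v w} : ℝ) * (n : ℝ) ^ (-(ε / 2)) ∧
            ∃ w : V, σ.SameCycle v w ∧ f w = true)}).toReal := by
  classical
  by_cases hVe : IsEmpty V
  · have hGu : {f : V → Bool | ∀ v : V,
        (n : ℝ) ^ ε ≤ (Nat.card {w : V | σ.SameCycle v w} : ℝ) →
        ((Nat.card {w : V | σ.SameCycle v w ∧ f w = true} : ℝ)
            ≤ 2 * (Nat.card {w : V | σ.SameCycle v w} : ℝ) * (n : ℝ) ^ (-(ε / 2)) ∧
          ∃ w : V, σ.SameCycle v w ∧ f w = true)} = Set.univ :=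
      Set.eq_univ_of_forall (fun f => fun v => (hVe.false v).elim)
    rw [hGu, measure_univ, ENNReal.toReal_one]
    have h2 : (0:ℝ) ≤ (n:ℝ) ^ ((1:ℝ) - c) := Real.rpow_nonneg (Nat.cast_nonneg n) _
    linarith
  have hn1 : 1 ≤ n := by
    rw [hn]
    have : Nonempty V := not_isEmpty_iff.mp hVe
    exact Fintype.card_pos
  by_cases hn1' : n = 1
  · subst hn1'
    simp only [Nat.cast_one, Real.one_rpow, sub_self]
    exact ENNReal.toReal_nonneg
  have hn2 : 2 ≤ n := by omega
  by_cases hc1 : c ≤ 1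
  · have hx : (1:ℝ) ≤ (n:ℝ) := by exact_mod_cast hn1
    have h1 : (1:ℝ) ≤ (n:ℝ) ^ ((1:ℝ) - c) := Real.one_le_rpow hx (by linarith)
    have := ENNReal.toReal_nonneg (a := Measure.pi
      (fun _ : V => (PMF.bernoulli p.toNNReal (by simpa using ENNReal.toNNReal_mono ENNReal.one_ne_top hp1)).toMeasure)
      {f : V → Bool | ∀ v : V,
        (n : ℝ) ^ ε ≤ (Nat.card {w : V | σ.SameCycle v w} : ℝ) →
        ((Nat.card {w : V | σ.SameCycle v w ∧ f w = true} : ℝ)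
            ≤ 2 * (Nat.card {w : V | σ.SameCycle v w} : ℝ) * (n : ℝ) ^ (-(ε / 2)) ∧
          ∃ w : V, σ.SameCycle v w ∧ f w = true)})
    linarith
  push_neg at hc1
  have hL : (0.6931471803 : ℝ) < Real.log 2 := Real.log_two_gt_d9
  have hn3 : 3 ≤ n := by
    by_contra h
    have hn2' : n = 2 := by omega
    subst hn2'
    have h1 : ((2:ℕ):ℝ) ^ (ε/2) ≤ (2:ℝ) ^ ((1:ℝ)/2) := by
      push_cast
      exact Real.rpow_le_rpow_of_exponent_le (by norm_num) (by linarith)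
    have h2 : (2:ℝ) ^ ((1:ℝ)/2) < 1.5 := by
      rw [← Real.sqrt_eq_rpow]
      rw [show (1.5:ℝ) = Real.sqrt (1.5^2) by rw [Real.sqrt_sq (by norm_num)]]
      exact Real.sqrt_lt_sqrt (by norm_num) (by norm_num)
    have h3 : (2:ℝ) < 3 * c * Real.log 2 := by nlinarith
    have h4 := hlarge
    push_cast at h4
    linarith
  -- main case : 3 ≤ n, 1 < c
  have hn0 : (0:ℝ) < (n:ℝ) := by positivity
  have hnR3 : (3:ℝ) ≤ (n:ℝ) := by exact_mod_cast hn3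
  have hnR1 : (1:ℝ) ≤ (n:ℝ) := by linarith
  set μ := Measure.pi (fun _ : V => (PMF.bernoulli p.toNNReal (by simpa using ENNReal.toNNReal_mono ENNReal.one_ne_top hp1)).toMeasure) with hmudef
  set q : ℝ := (n : ℝ) ^ (-(ε / 2)) with hqdef
  have hq0 : 0 < q := Real.rpow_pos_of_pos hn0 _
  have hq1 : q ≤ 1 := Real.rpow_le_one_of_one_le_of_nonpos hnR1 (by linarith)
  set G := {f : V → Bool | ∀ v : V,
      (n : ℝ) ^ ε ≤ (Nat.card {w : V | σ.SameCycle v w} : ℝ) →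
      ((Nat.card {w : V | σ.SameCycle v w ∧ f w = true} : ℝ)
          ≤ 2 * (Nat.card {w : V | σ.SameCycle v w} : ℝ) * q ∧
        ∃ w : V, σ.SameCycle v w ∧ f w = true)} with hGdef
  -- cycles as finsets
  set S : V → Finset V := fun v => univ.filter (fun w => σ.SameCycle v w) with hSdef
  have hKcard : ∀ v : V, (Nat.card {w : V | σ.SameCycle v w}) = (S v).card := by
    intro v
    rw [Nat.card_eq_fintype_card]
    exact Fintype.card_subtype _
  have hcnt : ∀ (v : V) (f : V → Bool),
      (Nat.card {w : V | σ.SameCycle v w ∧ f w = true})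
        = ((S v).filter fun w => f w = true).card := by
    intro v f
    rw [Nat.card_eq_fintype_card]
    rw [Fintype.card_subtype, hSdef]
    simp only [Finset.filter_filter]
    refine congrArg Finset.card ?_
    ext w
    simp
  -- bad events
  set C : V → Set (V → Bool) := fun v =>
    {f | (n:ℝ)^ε ≤ ((S v).card : ℝ) ∧
      ¬(((((S v).filter fun w => f w = true)).card : ℝ) ≤ 2 * ((S v).card : ℝ) * q ∧
        ∃ w : V, σ.SameCycle v w ∧ f w = true)} with hCdef
  have hsub : Gᶜ ⊆ ⋃ v : V, C v := by
    intro f hf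
    simp only [hGdef, Set.mem_compl_iff, Set.mem_setOf_eq, not_forall] at hf
    obtain ⟨v, h1, h2⟩ := hf
    rw [hKcard v] at h1
    rw [hcnt v f, hKcard v] at h2
    exact Set.mem_iUnion.mpr ⟨v, h1, h2⟩
  -- per-vertex bound
  set r1 : ℝ := (n:ℝ) ^ (-((6 * Real.log 2 - 3) * c)) with hr1def
  set r2 : ℝ := (n:ℝ) ^ (-(3 * c)) with hr2def
  have hbound : ∀ v : V, μ (C v) ≤ ENNReal.ofReal (r1 + r2) := by
    intro v
    by_cases hlong : (n:ℝ)^ε ≤ ((S v).card : ℝ)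
    swap
    · have : μ (C v) = 0 := measure_mono_null (fun f hf => (hlong hf.1).elim) measure_empty
      rw [this]
      exact zero_le
    · have hk0 : (0:ℝ) < ((S v).card:ℝ) := lt_of_lt_of_le (Real.rpow_pos_of_pos hn0 ε) hlong
      set k := (S v).card with hkdef
      have hkq : 3 * c * Real.log n ≤ (k:ℝ) * q := by
        have h1 : (n:ℝ)^ε * q ≤ (k:ℝ) * q := mul_le_mul_of_nonneg_right hlong hq0.le
        have h2 : (n:ℝ)^ε * q = (n:ℝ)^(ε/2) := by
          rw [hqdef, ← Real.rpow_add hn0]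
          congr 1; ring
        rw [h2] at h1
        linarith [hlarge]
      set m : ℝ := 2 * (k:ℝ) * q with hmdef
      set A := {f : V → Bool | m ≤ ((((S v).filter fun w => f w = true)).card : ℝ)} with hAdef
      set B := {f : V → Bool | ∀ w ∈ S v, f w = false} with hBdef
      have hCsub : C v ⊆ A ∪ B := by
        intro f hf
        rcases not_and_or.mp hf.2 with h | h
        · exact Or.inl (le_of_lt (lt_of_not_ge h))
        · refine Or.inr (fun w hw => ?_)
          rw [hSdef] at hw
          simp only [Finset.mem_filter, Finset.mem_univ, true_and] at hw
          by_contra hfw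
          exact h ⟨w, hw, by simpa using hfw⟩
      have htail := tail_bound hp1 (S v) m
      have h2m : (2:ℝ≥0∞) ^ m = ENNReal.ofReal ((2:ℝ) ^ m) := by
        rw [← ENNReal.ofReal_rpow_of_pos (by norm_num : (0:ℝ) < 2), ENNReal.ofReal_ofNat]
      have h1p : ((1:ℝ≥0∞) + p) ^ k = ENNReal.ofReal ((1 + q) ^ k) := by
        rw [ENNReal.ofReal_pow (by linarith), ENNReal.ofReal_add zero_le_one hq0.le,
          ENNReal.ofReal_one, hp]
      have hdiv : μ A ≤ ENNReal.ofReal ((1+q)^k / (2:ℝ)^m) := by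
        have hne0 : (2:ℝ≥0∞)^m ≠ 0 :=
          (ENNReal.rpow_pos (by norm_num) (by norm_num)).ne'
        have hnetop : (2:ℝ≥0∞)^m ≠ ⊤ := by
          rw [h2m]; exact ENNReal.ofReal_ne_top
        rw [ENNReal.ofReal_div_of_pos (Real.rpow_pos_of_pos (by norm_num) m), ← h2m, ← h1p]
        rw [ENNReal.le_div_iff_mul_le (Or.inl hne0) (Or.inl hnetop), mul_comm]
        exact htail
      have hreal : (1+q)^k / (2:ℝ)^m ≤ r1 := by
        have e1 : (1+q)^k ≤ Real.exp ((k:ℝ) * q) := by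
          have e1a : (1+q)^k ≤ (Real.exp q)^k :=
            pow_le_pow_left₀ (by linarith) (by linarith [Real.add_one_le_exp q]) k
          have e1b : (Real.exp q)^k = Real.exp ((k:ℝ) * q) := by
            rw [← Real.exp_nat_mul]
          linarith
        have e2 : (2:ℝ)^m = Real.exp (m * Real.log 2) := by
          rw [Real.rpow_def_of_pos (by norm_num), mul_comm]
        have e3 : (1+q)^k / (2:ℝ)^m
            ≤ Real.exp ((k:ℝ)*q) / Real.exp (m * Real.log 2) := by
          rw [e2]
          gcongr
        have e4 : Real.exp ((k:ℝ)*q) / Real.exp (m * Real.log 2)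
            = Real.exp ((k:ℝ)*q - m * Real.log 2) := (Real.exp_sub _ _).symm
        have e5 : Real.exp ((k:ℝ)*q - m * Real.log 2)
            ≤ Real.exp ((1 - 2*Real.log 2) * (3 * c * Real.log n)) := by
          apply Real.exp_le_exp.mpr
          rw [hmdef]
          nlinarith [mul_nonneg (sub_nonneg.mpr hkq)
            (by linarith : (0:ℝ) ≤ 2*Real.log 2 - 1)]
        have e6 : Real.exp ((1 - 2*Real.log 2) * (3 * c * Real.log n)) = r1 := by
          rw [hr1def, Real.rpow_def_of_pos hn0]
          congr 1; ring
        linarith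
      have hAbound : μ A ≤ ENNReal.ofReal r1 :=
        le_trans hdiv (ENNReal.ofReal_le_ofReal hreal)
      have h1q : (1:ℝ≥0∞) - p = ENNReal.ofReal (1 - q) := by
        rw [hp, ← ENNReal.ofReal_one, ← ENNReal.ofReal_sub 1 hq0.le]
      have hBeq : μ B = ENNReal.ofReal ((1-q)^k) := by
        have hB := nomark_bound hp1 (S v)
        rw [hmudef, hBdef]
        rw [hB, h1q, ← ENNReal.ofReal_pow (by linarith)]
      have hrB : (1-q)^k ≤ r2 := by
        have f1 : (1-q)^k ≤ (Real.exp (-q))^k :=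
          pow_le_pow_left₀ (by linarith) (by linarith [Real.add_one_le_exp (-q)]) k
        have f2 : (Real.exp (-q))^k = Real.exp ((k:ℝ) * (-q)) := by
          rw [← Real.exp_nat_mul]
        have f3 : Real.exp ((k:ℝ) * (-q)) ≤ Real.exp (-(3 * c * Real.log n)) := by
          apply Real.exp_le_exp.mpr
          rw [mul_neg]
          exact neg_le_neg hkq
        have f4 : Real.exp (-(3 * c * Real.log n)) = r2 := by
          rw [hr2def, Real.rpow_def_of_pos hn0]
          congr 1; ring
        linarith
      have hBbound : μ B ≤ ENNReal.ofReal r2 := by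
        rw [hBeq]
        exact ENNReal.ofReal_le_ofReal hrB
      refine le_trans (measure_mono hCsub) (le_trans (measure_union_le A B) ?_)
      calc μ A + μ B ≤ ENNReal.ofReal r1 + ENNReal.ofReal r2 := add_le_add hAbound hBbound
        _ = ENNReal.ofReal (r1 + r2) :=
          (ENNReal.ofReal_add (Real.rpow_nonneg hn0.le _) (Real.rpow_nonneg hn0.le _)).symm

  have hGc : μ Gᶜ ≤ ENNReal.ofReal ((n:ℝ) ^ ((1:ℝ) - c)) := by
    have h1 : μ Gᶜ ≤ ∑' v : V, μ (C v) :=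
      le_trans (measure_mono hsub) (measure_iUnion_le C)
    rw [tsum_fintype] at h1
    have h2 : ∑ v : V, μ (C v) ≤ ∑ v : V, ENNReal.ofReal (r1 + r2) :=
      Finset.sum_le_sum (fun v _ => hbound v)
    rw [Finset.sum_const, nsmul_eq_mul, Finset.card_univ, ← hn] at h2
    have h3 : (n : ℝ≥0∞) * ENNReal.ofReal (r1 + r2)
        = ENNReal.ofReal ((n:ℝ) * (r1 + r2)) := by
      rw [ENNReal.ofReal_mul hn0.le, ENNReal.ofReal_natCast]
    have hlog1 : (1:ℝ) ≤ Real.log n := by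
      rw [Real.le_log_iff_exp_le hn0]
      calc Real.exp 1 ≤ 2.7182818286 := Real.exp_one_lt_d9.le
        _ ≤ 3 := by norm_num
        _ ≤ (n:ℝ) := hnR3
    have hTn : (0:ℝ) ≤ (n:ℝ) ^ ((1:ℝ)-c) := Real.rpow_nonneg hn0.le _
    have e1 : (n:ℝ) * r1 ≤ (20/23) * (n:ℝ) ^ ((1:ℝ) - c) := by
      have h6 : (0.15:ℝ) ≤ 6 * Real.log 2 - 4 := by linarith
      have h7 : (0.15:ℝ) ≤ (6 * Real.log 2 - 4) * c := by
        nlinarith [mul_le_mul_of_nonneg_left hc1.le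
          (by linarith : (0:ℝ) ≤ 6 * Real.log 2 - 4)]
      have hh : (0.15:ℝ) ≤ Real.log n * ((6 * Real.log 2 - 4) * c) := by
        nlinarith [mul_le_mul_of_nonneg_right hlog1
          (by linarith : (0:ℝ) ≤ (6 * Real.log 2 - 4) * c)]
      have ha : (23/20 : ℝ) ≤ (n:ℝ) ^ ((6 * Real.log 2 - 4) * c) := by
        rw [Real.rpow_def_of_pos hn0]
        linarith [Real.add_one_le_exp (Real.log n * ((6 * Real.log 2 - 4) * c))]
      have hsplit : (n:ℝ) * r1
          = (n:ℝ) ^ ((1:ℝ) - c) * (n:ℝ) ^ (-((6*Real.log 2 - 4)*c)) := by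
        rw [hr1def, ← Real.rpow_add hn0]
        nth_rewrite 1 [← Real.rpow_one (n:ℝ)]
        rw [← Real.rpow_add hn0]
        congr 1; ring
      have hinv : (n:ℝ) ^ (-((6*Real.log 2 - 4)*c)) ≤ 20/23 := by
        rw [Real.rpow_neg hn0.le]
        have h8 : ((n:ℝ) ^ ((6*Real.log 2 - 4)*c))⁻¹ ≤ (23/20:ℝ)⁻¹ :=
          inv_anti₀ (by norm_num) ha
        have h9 : ((23:ℝ)/20)⁻¹ = 20/23 := by norm_num
        linarith
      nlinarith [mul_le_mul_of_nonneg_left hinv hTn]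
    have e2 : (n:ℝ) * r2 ≤ (1/9) * (n:ℝ) ^ ((1:ℝ) - c) := by
      have hb : (9:ℝ) ≤ (n:ℝ) ^ ((2:ℝ)*c) := by
        have h1' : (n:ℝ)^(2:ℝ) ≤ (n:ℝ)^((2:ℝ)*c) :=
          Real.rpow_le_rpow_of_exponent_le hnR1 (by nlinarith)
        have h2' : (n:ℝ)^(2:ℝ) = (n:ℝ) * (n:ℝ) := by
          rw [show (2:ℝ) = ((2:ℕ):ℝ) by norm_num, Real.rpow_natCast]
          ring
        have h3' : (9:ℝ) ≤ (n:ℝ) * (n:ℝ) := by nlinarith [sq_nonneg ((n:ℝ) - 3)]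
        exact le_trans (le_of_le_of_eq h3' h2'.symm) h1'
      have hsplit : (n:ℝ) * r2 = (n:ℝ) ^ ((1:ℝ) - c) * (n:ℝ) ^ (-((2:ℝ)*c)) := by
        rw [hr2def, ← Real.rpow_add hn0]
        nth_rewrite 1 [← Real.rpow_one (n:ℝ)]
        rw [← Real.rpow_add hn0]
        congr 1; ring
      have hinv : (n:ℝ) ^ (-((2:ℝ)*c)) ≤ 1/9 := by
        rw [Real.rpow_neg hn0.le]
        have h8 : ((n:ℝ) ^ ((2:ℝ)*c))⁻¹ ≤ (9:ℝ)⁻¹ :=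
          inv_anti₀ (by norm_num) hb
        have h9 : ((9:ℝ))⁻¹ = 1/9 := by norm_num
        linarith
      nlinarith [mul_le_mul_of_nonneg_left hinv hTn]
    have hfinal : (n:ℝ) * (r1 + r2) ≤ (n:ℝ) ^ ((1:ℝ) - c) := by
      have hnn : (0:ℝ) ≤ (n:ℝ) ^ ((1:ℝ) - c) := Real.rpow_nonneg hn0.le _
      nlinarith
    refine le_trans h1 (le_trans h2 ?_)
    rw [h3]
    exact ENNReal.ofReal_le_ofReal hfinal

  -- conclusion
  have hGm : MeasurableSet G := meas_all G
  have hcompl : μ G = 1 - μ Gᶜ := by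
    have h1 := prob_compl_eq_one_sub (μ := μ) hGm.compl
    rwa [compl_compl] at h1
  rw [hcompl, ENNReal.toReal_sub_of_le prob_le_one ENNReal.one_ne_top, ENNReal.toReal_one]
  have hfin : (μ Gᶜ).toReal ≤ (n:ℝ) ^ ((1:ℝ) - c) :=
    ENNReal.toReal_le_of_le_ofReal (Real.rpow_nonneg hn0.le _) hGc
  linarith
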